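/- arXiv:1810.08882 — 2 statements merged into one kernel-verified Lean document; each statement's English description precedes it below -/
import Mathlib

section
/- Let C be an additive category and I an ideal of C with I² = 0. Then an object X of C is a zero object if and only if its image in C/I is a zero object. Consequently, the quotient functor C → C/I is a representation equivalence: it is full, essentially surjective, and induces a bijection between isomorphism classes of objects. -/
open CategoryTheory CategoryTheory.Limits

/-- If `I` is an ideal of an additive (preadditive) category `C` with `I² = 0`,
then an object of `C` is zero iff its image in the quotient category `C/I` is
zero; consequently the quotient functor `C → C/I` is a representation
equivalence: full, essentially surjective and inducing a bijection on
isomorphism classes of objects. -/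
theorem stmt_3 {C : Type*} [Category C] [Preadditive C]
    (I : ∀ X Y : C, AddSubgroup (X ⟶ Y))
    (hleft : ∀ {X Y Z : C} (f : X ⟶ Y) (g : Y ⟶ Z), f ∈ I X Y → f ≫ g ∈ I X Z)
    (hright : ∀ {X Y Z : C} (f : X ⟶ Y) (g : Y ⟶ Z), g ∈ I Y Z → f ≫ g ∈ I X Z)
    (hsq : ∀ {X Y Z : C} (f : X ⟶ Y) (g : Y ⟶ Z), f ∈ I X Y → g ∈ I Y Z → f ≫ g = 0)
    (r : HomRel C) (hr : ∀ {X Y : C} (f g : X ⟶ Y), r f g ↔ f - g ∈ I X Y) :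
    (∀ X : C, IsZero X ↔ IsZero ((Quotient.functor r).obj X)) ∧
    (Quotient.functor r).Full ∧
    (Quotient.functor r).EssSurj ∧
    Function.Bijective
      (Quot.map (Quotient.functor r).obj
        (fun X Y h => h.elim fun e => ⟨(Quotient.functor r).mapIso e⟩) :
        Quot (fun X Y : C => Nonempty (X ≅ Y)) →
        Quot (fun X Y : CategoryTheory.Quotient r => Nonempty (X ≅ Y))) := by
  haveI hcong : Congruence r := by
    refine { equivalence := ?_, comp_left := ?_, comp_right := ?_ }
    rotate_right
    · intro X Y
      constructor
      · intro f; rw [hr]; simpa using (I X Y).zero_mem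
      · intro f g h; rw [hr] at h ⊢; simpa [neg_sub] using (I _ _).neg_mem h
      · intro f g k h₁ h₂; rw [hr] at h₁ h₂ ⊢
        simpa [sub_add_sub_cancel] using (I _ _).add_mem h₁ h₂
    · intro X Y Z f g g' h
      rw [hr] at h ⊢
      simpa [Preadditive.comp_sub] using hright f (g - g') h
    · intro X Y Z f f' g h
      rw [hr] at h ⊢
      simpa [Preadditive.sub_comp] using hleft (f - f') g h
  -- key: two elements of I compose to zero; identity in I forces id = 0
  have hmap_iff : ∀ {X Y : C} (f g : X ⟶ Y),
      (Quotient.functor r).map f = (Quotient.functor r).map g ↔ f - g ∈ I X Y := by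
    intro X Y f g
    rw [Quotient.functor_map_eq_iff, hr]
  -- reflection of isomorphisms
  have key : ∀ {X Y : C} (f : X ⟶ Y) (g : Y ⟶ X), f ≫ g - 𝟙 X ∈ I X X →
      f ≫ (g ≫ (𝟙 X - (f ≫ g - 𝟙 X))) = 𝟙 X := by
    intro X Y f g h
    have hz := hsq _ _ h h
    simp only [Preadditive.sub_comp, Preadditive.comp_sub, Category.id_comp,
      Category.comp_id, Category.assoc] at hz ⊢
    rw [sub_sub] at hz
    have hA := sub_eq_zero.mp hz
    rw [hA]; abel
  have reflect : ∀ {X Y : C},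
      ((Quotient.functor r).obj X ≅ (Quotient.functor r).obj Y) → Nonempty (X ≅ Y) := by
    intro X Y e
    obtain ⟨f, hf⟩ := (Quotient.functor r).map_surjective e.hom
    obtain ⟨g, hg⟩ := (Quotient.functor r).map_surjective e.inv
    have h1 : f ≫ g - 𝟙 X ∈ I X X := by
      rw [← hmap_iff, Functor.map_comp, hf, hg, e.hom_inv_id, CategoryTheory.Functor.map_id]
    have h2 : g ≫ f - 𝟙 Y ∈ I Y Y := by
      rw [← hmap_iff, Functor.map_comp, hf, hg, e.inv_hom_id, CategoryTheory.Functor.map_id]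
    refine ⟨⟨f, g ≫ (𝟙 X - (f ≫ g - 𝟙 X)), key f g h1, ?_⟩⟩
    have hl : ((𝟙 Y - (g ≫ f - 𝟙 Y)) ≫ g) ≫ f = 𝟙 Y := by
      have := key g f h2
      simp only [Preadditive.sub_comp, Preadditive.comp_sub, Category.id_comp,
        Category.comp_id, Category.assoc] at this ⊢
      convert this using 2
    calc (g ≫ (𝟙 X - (f ≫ g - 𝟙 X))) ≫ f
        = (((𝟙 Y - (g ≫ f - 𝟙 Y)) ≫ g) ≫ f) ≫ ((g ≫ (𝟙 X - (f ≫ g - 𝟙 X))) ≫ f) := by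
          rw [hl, Category.id_comp]
      _ = (((𝟙 Y - (g ≫ f - 𝟙 Y)) ≫ g) ≫ (f ≫ (g ≫ (𝟙 X - (f ≫ g - 𝟙 X))))) ≫ f := by
          simp only [Category.assoc]
      _ = 𝟙 Y := by rw [key f g h1, Category.comp_id, hl]
  refine ⟨?_, inferInstance, inferInstance, ?_, ?_⟩
  · intro X
    constructor
    · intro hX
      constructor
      · intro Y
        refine ⟨⟨⟨Quot.mk _ (0 : X ⟶ Y.as)⟩, ?_⟩⟩
        rintro ⟨f⟩
        exact congrArg (Quot.mk _) (hX.eq_of_src f 0)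
      · intro Y
        refine ⟨⟨⟨Quot.mk _ (0 : Y.as ⟶ X)⟩, ?_⟩⟩
        rintro ⟨f⟩
        exact congrArg (Quot.mk _) (hX.eq_of_tgt f 0)
    · intro hX
      rw [IsZero.iff_id_eq_zero]
      have : (Quotient.functor r).map (𝟙 X) = (Quotient.functor r).map 0 :=
        hX.eq_of_src _ _
      rw [hmap_iff] at this
      have h1 : 𝟙 X ∈ I X X := by simpa using this
      have := hsq _ _ h1 h1
      simpa using this
  · intro x y hxy
    induction x using Quot.ind with | _ X =>
    induction y using Quot.ind with | _ Y =>
    have heq : Equivalence (fun A B : CategoryTheory.Quotient r => Nonempty (A ≅ B)) :=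
      ⟨fun A => ⟨Iso.refl A⟩, fun ⟨e⟩ => ⟨e.symm⟩, fun ⟨e⟩ ⟨e'⟩ => ⟨e.trans e'⟩⟩
    have := heq.eqvGen_iff.mp (Quot.eqvGen_exact hxy)
    obtain ⟨e⟩ := this
    exact Quot.sound (reflect e)
  · intro q
    induction q using Quot.ind with | _ Y =>
    exact ⟨Quot.mk _ Y.as, rfl⟩
end

section
/- Let A and B be additive categories and U : A^op × B → Ab a biadditive functor. In the bimodule category El(U), the element α ⊕ β ∈ U(A ⊕ A', B ⊕ B') (defined as the image of (α, β) under the canonical isomorphism U(A,B) × U(A',B') ≅ U(A ⊕ A', B ⊕ B')) is a biproduct of α and β. Hence El(U) is an additive category if A and B are. -/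
open CategoryTheory CategoryTheory.Limits Opposite

/-- For a biadditive functor `U : Aᵒᵖ × B ⥤ Ab` on additive categories `A`, `B`,
the element `α ⊕ β := U(fst.op, inl)(α) + U(snd.op, inr)(β) ∈ U(A₁ ⊞ A₂, B₁ ⊞ B₂)`
is a biproduct of `α` and `β` in the bimodule category `El(U)`: the canonical
injections and projections of the biproducts in `A` and `B` give morphisms
`α → α ⊕ β`, `β → α ⊕ β`, `α ⊕ β → α`, `α ⊕ β → β` in `El(U)` satisfying the
biproduct identities (which hold componentwise). Hence `El(U)` is additive. -/
theorem stmt_5 {A B : Type*} [Category A] [Category B]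
    [Preadditive A] [Preadditive B]
    [HasBinaryBiproducts A] [HasBinaryBiproducts B]
    (U : (Aᵒᵖ × B) ⥤ AddCommGrpCat)
    (hadd₁ : ∀ {X X' : Aᵒᵖ} {Y Y' : B} (f f' : X ⟶ X') (g : Y ⟶ Y')
      (u : U.obj (X, Y)),
      U.map ((f + f', g) : (X, Y) ⟶ (X', Y')) u
        = U.map ((f, g) : (X, Y) ⟶ (X', Y')) u
          + U.map ((f', g) : (X, Y) ⟶ (X', Y')) u)
    (hadd₂ : ∀ {X X' : Aᵒᵖ} {Y Y' : B} (f : X ⟶ X') (g g' : Y ⟶ Y')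
      (u : U.obj (X, Y)),
      U.map ((f, g + g') : (X, Y) ⟶ (X', Y')) u
        = U.map ((f, g) : (X, Y) ⟶ (X', Y')) u
          + U.map ((f, g') : (X, Y) ⟶ (X', Y')) u)
    {A₁ A₂ : A} {B₁ B₂ : B}
    (α : U.obj (op A₁, B₁)) (β : U.obj (op A₂, B₂)) :
    let s : U.obj (op (A₁ ⊞ A₂), B₁ ⊞ B₂) :=
      U.map (((biprod.fst : A₁ ⊞ A₂ ⟶ A₁).op, (biprod.inl : B₁ ⟶ B₁ ⊞ B₂)) :
          (op A₁, B₁) ⟶ (op (A₁ ⊞ A₂), B₁ ⊞ B₂)) α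
      + U.map (((biprod.snd : A₁ ⊞ A₂ ⟶ A₂).op, (biprod.inr : B₂ ⟶ B₁ ⊞ B₂)) :
          (op A₂, B₂) ⟶ (op (A₁ ⊞ A₂), B₁ ⊞ B₂)) β
    -- `(inl, inl)` is a morphism `α → s` in `El(U)`
    (U.map ((𝟙 (op A₁), (biprod.inl : B₁ ⟶ B₁ ⊞ B₂)) :
        (op A₁, B₁) ⟶ (op A₁, B₁ ⊞ B₂)) α
      = U.map (((biprod.inl : A₁ ⟶ A₁ ⊞ A₂).op, 𝟙 (B₁ ⊞ B₂)) :
        (op (A₁ ⊞ A₂), B₁ ⊞ B₂) ⟶ (op A₁, B₁ ⊞ B₂)) s) ∧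
    -- `(inr, inr)` is a morphism `β → s`
    (U.map ((𝟙 (op A₂), (biprod.inr : B₂ ⟶ B₁ ⊞ B₂)) :
        (op A₂, B₂) ⟶ (op A₂, B₁ ⊞ B₂)) β
      = U.map (((biprod.inr : A₂ ⟶ A₁ ⊞ A₂).op, 𝟙 (B₁ ⊞ B₂)) :
        (op (A₁ ⊞ A₂), B₁ ⊞ B₂) ⟶ (op A₂, B₁ ⊞ B₂)) s) ∧
    -- `(fst, fst)` is a morphism `s → α`
    (U.map ((𝟙 (op (A₁ ⊞ A₂)), (biprod.fst : B₁ ⊞ B₂ ⟶ B₁)) :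
        (op (A₁ ⊞ A₂), B₁ ⊞ B₂) ⟶ (op (A₁ ⊞ A₂), B₁)) s
      = U.map (((biprod.fst : A₁ ⊞ A₂ ⟶ A₁).op, 𝟙 B₁) :
        (op A₁, B₁) ⟶ (op (A₁ ⊞ A₂), B₁)) α) ∧
    -- `(snd, snd)` is a morphism `s → β`
    (U.map ((𝟙 (op (A₁ ⊞ A₂)), (biprod.snd : B₁ ⊞ B₂ ⟶ B₂)) :
        (op (A₁ ⊞ A₂), B₁ ⊞ B₂) ⟶ (op (A₁ ⊞ A₂), B₂)) s
      = U.map (((biprod.snd : A₁ ⊞ A₂ ⟶ A₂).op, 𝟙 B₂) :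
        (op A₂, B₂) ⟶ (op (A₁ ⊞ A₂), B₂)) β) ∧
    -- the biproduct identities hold componentwise
    ((biprod.fst ≫ biprod.inl + biprod.snd ≫ biprod.inr : A₁ ⊞ A₂ ⟶ A₁ ⊞ A₂)
        = 𝟙 (A₁ ⊞ A₂)) ∧
    ((biprod.fst ≫ biprod.inl + biprod.snd ≫ biprod.inr : B₁ ⊞ B₂ ⟶ B₁ ⊞ B₂)
        = 𝟙 (B₁ ⊞ B₂)) := by
  intro s
  have h0₁ : ∀ {X X' : Aᵒᵖ} {Y Y' : B} (g : Y ⟶ Y') (u : U.obj (X, Y)),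
      U.map (((0 : X ⟶ X'), g) : (X, Y) ⟶ (X', Y')) u = 0 := by
    intro X X' Y Y' g u
    have h := hadd₁ (0 : X ⟶ X') (0 : X ⟶ X') g u
    rw [add_zero] at h
    exact left_eq_add.mp h
  have h0₂ : ∀ {X X' : Aᵒᵖ} {Y Y' : B} (f : X ⟶ X') (u : U.obj (X, Y)),
      U.map ((f, (0 : Y ⟶ Y')) : (X, Y) ⟶ (X', Y')) u = 0 := by
    intro X X' Y Y' f u
    have h := hadd₂ f (0 : Y ⟶ Y') (0 : Y ⟶ Y') u
    rw [add_zero] at h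
    exact left_eq_add.mp h
  refine ⟨?_, ?_, ?_, ?_, by simp [biprod.total], by simp [biprod.total]⟩
  · show _ = U.map _ (U.map _ α + U.map _ β)
    rw [map_add]
    rw [← CategoryTheory.comp_apply, ← CategoryTheory.comp_apply,
      ← U.map_comp, ← U.map_comp]
    simp only [prod_comp, ← op_comp, Category.comp_id, Category.id_comp,
      biprod.inl_fst, biprod.inl_snd, biprod.inr_fst, biprod.inr_snd, op_id,
      op_zero, h0₁, h0₂, add_zero, zero_add]
  · show _ = U.map _ (U.map _ α + U.map _ β)
    rw [map_add]
    rw [← CategoryTheory.comp_apply, ← CategoryTheory.comp_apply,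
      ← U.map_comp, ← U.map_comp]
    simp only [prod_comp, ← op_comp, Category.comp_id, Category.id_comp,
      biprod.inl_fst, biprod.inl_snd, biprod.inr_fst, biprod.inr_snd, op_id,
      op_zero, h0₁, h0₂, add_zero, zero_add]
  · show U.map _ (U.map _ α + U.map _ β) = _
    rw [map_add]
    rw [← CategoryTheory.comp_apply, ← CategoryTheory.comp_apply,
      ← U.map_comp, ← U.map_comp]
    simp only [prod_comp, ← op_comp, Category.comp_id, Category.id_comp,
      biprod.inl_fst, biprod.inl_snd, biprod.inr_fst, biprod.inr_snd, op_id,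
      op_zero, h0₁, h0₂, add_zero, zero_add]
  · show U.map _ (U.map _ α + U.map _ β) = _
    rw [map_add]
    rw [← CategoryTheory.comp_apply, ← CategoryTheory.comp_apply,
      ← U.map_comp, ← U.map_comp]
    simp only [prod_comp, ← op_comp, Category.comp_id, Category.id_comp,
      biprod.inl_fst, biprod.inl_snd, biprod.inr_fst, biprod.inr_snd, op_id,
      op_zero, h0₁, h0₂, add_zero, zero_add]
end
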